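/- Let f : ℝⁿ → ℝ be convex, x₀ ∈ ℝⁿ, λ > 0, and suppose x* minimizes x ↦ ‖y − Ax‖ + λ f(x) with y − Ax* ≠ 0. Then x* also minimizes x ↦ ½‖y − Ax‖² + τ' f(x) for τ' = λ·‖Ax* − y‖. -/
import Mathlib

theorem stmt16 {m n : ℕ} (A : Matrix (Fin m) (Fin n) ℝ)
    (f : EuclideanSpace ℝ (Fin n) → ℝ) (hfconv : ConvexOn ℝ Set.univ f)
    (y : EuclideanSpace ℝ (Fin m)) (lam : ℝ) (hlam : 0 < lam)
    (x : EuclideanSpace ℝ (Fin n))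
    (hopt : ∀ x', ‖y - Matrix.toEuclideanLin A x‖ + lam * f x
      ≤ ‖y - Matrix.toEuclideanLin A x'‖ + lam * f x')
    (hne : y - Matrix.toEuclideanLin A x ≠ 0) :
    ∀ x', (1 / 2) * ‖y - Matrix.toEuclideanLin A x‖ ^ 2
        + (lam * ‖Matrix.toEuclideanLin A x - y‖) * f x
      ≤ (1 / 2) * ‖y - Matrix.toEuclideanLin A x'‖ ^ 2
        + (lam * ‖Matrix.toEuclideanLin A x - y‖) * f x' := by
  intro x'
  have h := hopt x'
  have hr : ‖Matrix.toEuclideanLin A x - y‖ = ‖y - Matrix.toEuclideanLin A x‖ :=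
    norm_sub_rev _ _
  rw [hr]
  set r := ‖y - Matrix.toEuclideanLin A x‖ with hrdef
  set r' := ‖y - Matrix.toEuclideanLin A x'‖ with hr'def
  have hr0 : 0 ≤ r := norm_nonneg _
  have hr'0 : 0 ≤ r' := norm_nonneg _
  nlinarith [sq_nonneg (r - r'), mul_le_mul_of_nonneg_left h hr0]
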